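/- Let R be an elementary divisor domain, g(t) ∈ R[t] monic of degree n, f(t) ∈ R[t], and suppose g(t) = G(t)z(t) and f(t) = F(t)z(t) where z(t) is a monic common divisor of f and g of degree m. Then the matrix f(C_g) is equivalent over R to the direct sum F(C_G) ⊕ 0_{m×m}. In particular F(C_G) has invariant factors s_1,...,s_r if and only if f(C_g) has invariant factors s_1,...,s_r together with 0 repeated m times. -/

import Mathlib

open Polynomial Matrix

def companion {R : Type*} [CommRing R] (g : R[X]) :
    Matrix (Fin g.natDegree) (Fin g.natDegree) R :=
  Matrix.of fun i j =>
    if (i : ℕ) = 0 then -g.coeff (g.natDegree - 1 - (j : ℕ))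
    else if (i : ℕ) = (j : ℕ) + 1 then 1 else 0

def IsEDD (R : Type*) [CommRing R] : Prop :=
  ∀ a b c : R, ∃ d x y z w : R,
    (d ∣ a ∧ d ∣ b ∧ d ∣ c ∧ ∀ e : R, e ∣ a → e ∣ b → e ∣ c → e ∣ d) ∧
    d = z * x * a + z * y * b + w * y * c

namespace Stmt5Aux

variable {R : Type*} [CommRing R]

noncomputable def hpoly (g : R[X]) (j : ℕ) : R[X] :=
  X ^ j + ∑ k ∈ Finset.range j, C (g.coeff (g.natDegree - j + k)) * X ^ k

theorem hpoly_tail_degree_lt (g : R[X]) (j : ℕ) :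
    (∑ k ∈ Finset.range j, C (g.coeff (g.natDegree - j + k)) * X ^ k).degree
      < ((j : ℕ) : WithBot ℕ) := by
  apply lt_of_le_of_lt (degree_sum_le _ _)
  rw [Finset.sup_lt_iff (by exact_mod_cast WithBot.bot_lt_coe j)]
  intro k hk
  exact lt_of_le_of_lt (degree_C_mul_X_pow_le _ _)
    (by exact_mod_cast Finset.mem_range.mp hk)

theorem hpoly_monic (g : R[X]) (j : ℕ) : (hpoly g j).Monic :=
  monic_X_pow_add (hpoly_tail_degree_lt g j)

theorem hpoly_natDegree [Nontrivial R] (g : R[X]) (j : ℕ) : (hpoly g j).natDegree = j := by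
  have h := hpoly_tail_degree_lt g j
  apply natDegree_eq_of_degree_eq_some
  rw [hpoly, degree_add_eq_left_of_degree_lt (by rwa [degree_X_pow]), degree_X_pow]

theorem hpoly_succ (g : R[X]) {j : ℕ} (hj : j < g.natDegree) :
    hpoly g (j + 1) = X * hpoly g j + C (g.coeff (g.natDegree - 1 - j)) := by
  unfold hpoly
  rw [Finset.sum_range_succ']
  have h1 : ∑ k ∈ Finset.range j, C (g.coeff (g.natDegree - (j+1) + (k+1))) * X ^ (k+1)
      = X * ∑ k ∈ Finset.range j, C (g.coeff (g.natDegree - j + k)) * X ^ k := by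
    rw [Finset.mul_sum]
    refine Finset.sum_congr rfl fun k _ => ?_
    rw [show g.natDegree - (j+1) + (k+1) = g.natDegree - j + k by omega]
    ring
  rw [h1, show g.natDegree - (j+1) + 0 = g.natDegree - 1 - j by omega]
  ring

theorem hpoly_self (g : R[X]) (hg : g.Monic) : hpoly g g.natDegree = g := by
  conv_rhs => rw [hg.as_sum]
  unfold hpoly
  congr 1
  exact Finset.sum_congr rfl fun k _ => by rw [show g.natDegree - g.natDegree + k = k by omega]

theorem hpoly_zero (g : R[X]) : hpoly g 0 = 1 := by simp [hpoly]


variable {R : Type*} [CommRing R]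

theorem exists_basis (g : R[X]) (hg : g.Monic) [Nontrivial R]
    (v : Fin g.natDegree → R[X]) (deg : Fin g.natDegree → Fin g.natDegree)
    (hmon : ∀ j, (v j).Monic) (hdeg : ∀ j, (v j).natDegree = (deg j : ℕ))
    (hinj : Function.Injective deg) :
    ∃ b : Module.Basis (Fin g.natDegree) R (AdjoinRoot g),
      ∀ j, b j = AdjoinRoot.mk g (v j) := by
  classical
  let B : Module.Basis (Fin g.natDegree) R (AdjoinRoot g) := (AdjoinRoot.powerBasis' hg).basis
  have hBpow : ∀ i : Fin g.natDegree, B i = AdjoinRoot.root g ^ (i : ℕ) := by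
    intro i
    have := (AdjoinRoot.powerBasis' hg).basis_eq_pow i
    rwa [AdjoinRoot.powerBasis'_gen] at this
  let L : Matrix (Fin g.natDegree) (Fin g.natDegree) R := Matrix.of fun i j => (v j).coeff i
  have hvlt : ∀ j, (v j).natDegree < g.natDegree := fun j => by rw [hdeg]; exact (deg j).isLt
  have hmk : ∀ j, AdjoinRoot.mk g (v j) = ∑ i, L i j • B i := by
    intro j
    conv_lhs => rw [(v j).as_sum_range' g.natDegree (hvlt j)]
    rw [map_sum, ← Fin.sum_univ_eq_sum_range
      (fun i => AdjoinRoot.mk g (monomial i ((v j).coeff i)))]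
    refine Finset.sum_congr rfl fun i _ => ?_
    rw [hBpow, ← C_mul_X_pow_eq_monomial, ← smul_eq_C_mul, ← AdjoinRoot.smul_mk, map_pow,
      AdjoinRoot.mk_X]
    rfl
  have hbij : Function.Bijective deg := Finite.injective_iff_bijective.mp hinj
  let σ : Equiv.Perm (Fin g.natDegree) := Equiv.ofBijective deg hbij
  have hσ : ∀ j, σ j = deg j := fun j => rfl
  have htri : (L.submatrix id ⇑σ.symm).BlockTriangular id := by
    intro i j hji
    apply coeff_eq_zero_of_natDegree_lt
    rw [hdeg]
    have h2 : deg (σ.symm j) = j := by rw [← hσ]; exact σ.apply_symm_apply j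
    rw [h2]
    exact hji
  have hMdet : (L.submatrix id ⇑σ.symm).det = 1 := by
    rw [Matrix.det_of_upperTriangular htri]
    refine Finset.prod_eq_one fun i _ => ?_
    have hdi : deg (σ.symm i) = i := by rw [← hσ]; exact σ.apply_symm_apply i
    have hnd : (v (σ.symm i)).natDegree = (i : ℕ) := by rw [hdeg, hdi]
    simp only [Matrix.submatrix_apply, id_eq, Matrix.of_apply, L]
    rw [← hnd]
    exact hmon (σ.symm i)
  have hLdet : IsUnit L.det := by
    have hL : L = (L.submatrix id ⇑σ.symm).submatrix id ⇑σ := by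
      ext i j
      simp [Matrix.submatrix_apply]
    rw [hL, Matrix.det_permute' σ, hMdet, mul_one]
    rcases Int.units_eq_one_or (Equiv.Perm.sign σ) with h | h <;> simp [h]
  refine ⟨B.map (Matrix.toLinearEquiv B L hLdet), fun j => ?_⟩
  rw [Module.Basis.map_apply, Matrix.toLinearEquiv_apply, Matrix.toLin_self, hmk]

theorem aeval_companion (g : R[X]) (hg : g.Monic)
    (b : Module.Basis (Fin g.natDegree) R (AdjoinRoot g))
    (hb : ∀ j, b j = AdjoinRoot.mk g (hpoly g (j : ℕ))) (f : R[X]) :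
    aeval (companion g) f
      = LinearMap.toMatrix b b (Algebra.lmul R (AdjoinRoot g) (AdjoinRoot.mk g f)) := by
  classical
  have key : LinearMap.toMatrixAlgEquiv b
      (Algebra.lmul R (AdjoinRoot g) (AdjoinRoot.root g)) = companion g := by
    ext i j
    rw [LinearMap.toMatrixAlgEquiv_apply, hb j]
    have happ : Algebra.lmul R (AdjoinRoot g) (AdjoinRoot.root g)
        (AdjoinRoot.mk g (hpoly g (j : ℕ))) = AdjoinRoot.mk g (X * hpoly g (j : ℕ)) := by
      have hmm : AdjoinRoot.mk g (X * hpoly g (j : ℕ))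
          = AdjoinRoot.root g * AdjoinRoot.mk g (hpoly g (j : ℕ)) := by
        rw [_root_.map_mul, AdjoinRoot.mk_X]
      rw [hmm]; rfl
    rw [happ]
    have h0 : (0 : ℕ) < g.natDegree := j.pos
    by_cases hj : (j : ℕ) + 1 < g.natDegree
    · have hXh : X * hpoly g (j : ℕ)
          = hpoly g ((j : ℕ) + 1) - C (g.coeff (g.natDegree - 1 - (j : ℕ))) := by
        rw [hpoly_succ g j.isLt]; ring
      have hmkC : AdjoinRoot.mk g (C (g.coeff (g.natDegree - 1 - (j : ℕ))))
          = (g.coeff (g.natDegree - 1 - (j : ℕ))) • b ⟨0, h0⟩ := by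
        rw [hb, hpoly_zero, AdjoinRoot.smul_mk, smul_eq_C_mul, mul_one]
      rw [hXh, map_sub, hmkC, ← hb ⟨(j : ℕ) + 1, hj⟩, map_sub, _root_.map_smul,
        b.repr_self, b.repr_self]
      simp only [Finsupp.sub_apply, Finsupp.smul_apply, Finsupp.single_apply, companion,
        Matrix.of_apply, smul_eq_mul, mul_ite, mul_one, mul_zero]
      by_cases hi0 : (i : ℕ) = 0
      · have h1 : (⟨(j : ℕ) + 1, hj⟩ : Fin g.natDegree) ≠ i := by
          intro h; rw [← h] at hi0; simp at hi0
        have h2 : (⟨0, h0⟩ : Fin g.natDegree) = i := by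
          apply Fin.ext; simp [hi0]
        rw [if_neg h1, if_pos h2, if_pos hi0]
        ring
      · rw [if_neg hi0]
        have h2 : ¬ (⟨0, h0⟩ : Fin g.natDegree) = i := by
          intro h; rw [← h] at hi0; simp at hi0
        rw [if_neg h2]
        by_cases hij : (i : ℕ) = (j : ℕ) + 1
        · rw [if_pos (Fin.ext hij.symm), if_pos hij]; ring
        · rw [if_neg (fun h => hij (by rw [← h])), if_neg hij]; ring
    · have hjn : (j : ℕ) + 1 = g.natDegree := by omega
      have hXh : X * hpoly g (j : ℕ) = g - C (g.coeff (g.natDegree - 1 - (j : ℕ))) := by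
        have h5 : hpoly g ((j : ℕ) + 1) = g := by rw [hjn, hpoly_self g hg]
        rw [hpoly_succ g j.isLt] at h5
        exact eq_sub_iff_add_eq.mpr h5
      have hmkC : AdjoinRoot.mk g (C (g.coeff (g.natDegree - 1 - (j : ℕ))))
          = (g.coeff (g.natDegree - 1 - (j : ℕ))) • b ⟨0, h0⟩ := by
        rw [hb, hpoly_zero, AdjoinRoot.smul_mk, smul_eq_C_mul, mul_one]
      rw [hXh, map_sub, AdjoinRoot.mk_self, zero_sub, hmkC, map_neg, _root_.map_smul, b.repr_self]
      simp only [Finsupp.neg_apply, Finsupp.smul_apply, Finsupp.single_apply, companion,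
        Matrix.of_apply, smul_eq_mul, mul_ite, mul_one, mul_zero]
      by_cases hi0 : (i : ℕ) = 0
      · rw [if_pos (Fin.ext (by simp [hi0])), if_pos hi0]
        try ring
      · rw [if_neg (fun h => hi0 (by rw [← h])), if_neg hi0,
          if_neg (by omega : ¬ (i : ℕ) = (j : ℕ) + 1)]
        ring
  have h2 : companion g = LinearMap.toMatrixAlgEquiv b
      (Algebra.lmul R (AdjoinRoot g) (AdjoinRoot.root g)) := key.symm
  rw [h2, aeval_algHom_apply, aeval_algHom_apply, AdjoinRoot.aeval_eq]
  rfl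


end Stmt5Aux
open Stmt5Aux AdjoinRoot in
/-- If `g = G z` and `f = F z` with `z` a monic common divisor of `f` and `g`
(`g`, `G` monic), then `f(C_g)` is equivalent over the elementary divisor domain `R`
to the direct sum `F(C_G) ⊕ 0_{m×m}` where `m = deg z`. -/
theorem stmt5 {R : Type*} [CommRing R] [IsDomain R] (hR : IsEDD R)
    (g f z G F : R[X]) (hg : g.Monic) (hz : z.Monic) (hG : G.Monic)
    (hgz : g = G * z) (hfz : f = F * z) :
    ∃ U V : Matrix (Fin g.natDegree) (Fin g.natDegree) R,
      IsUnit U.det ∧ IsUnit V.det ∧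
      U * Polynomial.aeval (companion g) f * V =
        Matrix.of (fun (i j : Fin g.natDegree) =>
          if h : (i : ℕ) < G.natDegree ∧ (j : ℕ) < G.natDegree then
            Polynomial.aeval (companion G) F ⟨(i : ℕ), h.1⟩ ⟨(j : ℕ), h.2⟩
          else 0) := by
  classical
  have hnm : g.natDegree = G.natDegree + z.natDegree := by
    rw [hgz, hG.natDegree_mul hz]
  -- Horner basis for g
  obtain ⟨hbg, hhbg⟩ := exists_basis g hg (fun j => hpoly g (j : ℕ)) id
    (fun j => hpoly_monic g _) (fun j => hpoly_natDegree g _) Function.injective_id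
  -- Horner basis for G
  obtain ⟨hbG, hhbG⟩ := exists_basis G hG (fun j => hpoly G (j : ℕ)) id
    (fun j => hpoly_monic G _) (fun j => hpoly_natDegree G _) Function.injective_id
  -- source basis S
  obtain ⟨S, hS⟩ := exists_basis g hg
    (fun j => if (j : ℕ) < G.natDegree then hpoly G (j : ℕ)
      else G * X ^ ((j : ℕ) - G.natDegree))
    id
    (fun j => by
      by_cases h : (j : ℕ) < G.natDegree
      · simpa [h] using hpoly_monic G (j : ℕ)
      · simpa [h] using hG.mul (monic_X_pow _))
    (fun j => by
      by_cases h : (j : ℕ) < G.natDegree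
      · simp [h, hpoly_natDegree]
      · have hj := j.isLt
        simp only [h, if_false, id_eq]
        rw [hG.natDegree_mul (monic_X_pow _), natDegree_X_pow]
        omega)
    Function.injective_id
  -- target basis T
  obtain ⟨T, hT⟩ := exists_basis g hg
    (fun j => if (j : ℕ) < G.natDegree then z * hpoly G (j : ℕ)
      else X ^ ((j : ℕ) - G.natDegree))
    (fun j => if h : (j : ℕ) < G.natDegree then ⟨z.natDegree + (j : ℕ), by omega⟩
      else ⟨(j : ℕ) - G.natDegree, by have := j.isLt; omega⟩)
    (fun j => by
      by_cases h : (j : ℕ) < G.natDegree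
      · simpa [h] using hz.mul (hpoly_monic G (j : ℕ))
      · simpa [h] using monic_X_pow _)
    (fun j => by
      by_cases h : (j : ℕ) < G.natDegree
      · rw [if_pos h, dif_pos h, hz.natDegree_mul (hpoly_monic G _), hpoly_natDegree]
      · rw [if_neg h, dif_neg h, natDegree_X_pow])
    (by
      intro a b hab
      have hval := congrArg Fin.val hab
      simp only at hval
      have ha' := a.isLt
      have hb' := b.isLt
      apply Fin.ext
      split_ifs at hval <;> simp only [] at hval <;> omega)
  -- the multiplication map
  set μ := Algebra.lmul R (AdjoinRoot g) (AdjoinRoot.mk g f) with hμ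
  have hcg : Polynomial.aeval (companion g) f = LinearMap.toMatrix hbg hbg μ :=
    aeval_companion g hg hbg hhbg f
  have hcG : Polynomial.aeval (companion G) F
      = LinearMap.toMatrix hbG hbG (Algebra.lmul R (AdjoinRoot G) (AdjoinRoot.mk G F)) :=
    aeval_companion G hG hbG hhbG F
  -- the block computation
  have hblock : LinearMap.toMatrix S T μ =
      Matrix.of (fun (i j : Fin g.natDegree) =>
        if h : (i : ℕ) < G.natDegree ∧ (j : ℕ) < G.natDegree then
          Polynomial.aeval (companion G) F ⟨(i : ℕ), h.1⟩ ⟨(j : ℕ), h.2⟩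
        else 0) := by
    ext i j
    rw [LinearMap.toMatrix_apply]
    by_cases hj : (j : ℕ) < G.natDegree
    · set c : Fin G.natDegree → R := fun k =>
        LinearMap.toMatrix hbG hbG (Algebra.lmul R (AdjoinRoot G) (AdjoinRoot.mk G F))
          k ⟨(j : ℕ), hj⟩ with hc
      have hx : (Algebra.lmul R (AdjoinRoot G) (AdjoinRoot.mk G F)) (hbG ⟨(j : ℕ), hj⟩)
          = AdjoinRoot.mk G (F * hpoly G (j : ℕ)) := by
        rw [hhbG, _root_.map_mul]; rfl
      have hrepr : ∀ k, hbG.repr (AdjoinRoot.mk G (F * hpoly G (j : ℕ))) k = c k := by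
        intro k
        rw [hc]
        simp only [LinearMap.toMatrix_apply, hx]
      have h1 : AdjoinRoot.mk G (F * hpoly G (j : ℕ))
          = ∑ k : Fin G.natDegree, AdjoinRoot.mk G (C (c k) * hpoly G (k : ℕ)) := by
        conv_lhs => rw [← hbG.sum_repr (AdjoinRoot.mk G (F * hpoly G (j : ℕ)))]
        refine Finset.sum_congr rfl fun k _ => ?_
        rw [hrepr, hhbG, AdjoinRoot.smul_mk, smul_eq_C_mul]
      rw [← _root_.map_sum] at h1
      obtain ⟨q, hq⟩ := AdjoinRoot.mk_eq_mk.mp h1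
      have h3 : f * hpoly G (j : ℕ)
          = (∑ k : Fin G.natDegree, C (c k) * (z * hpoly G (k : ℕ))) + g * q := by
        have hF : F * hpoly G (j : ℕ)
            = (∑ k : Fin G.natDegree, C (c k) * hpoly G (k : ℕ)) + G * q := by
          linear_combination hq
        calc f * hpoly G (j : ℕ) = z * (F * hpoly G (j : ℕ)) := by rw [hfz]; ring
          _ = z * ((∑ k : Fin G.natDegree, C (c k) * hpoly G (k : ℕ)) + G * q) := by rw [hF]
          _ = _ := by
              rw [hgz, mul_add, Finset.mul_sum]
              congr 1
              · exact Finset.sum_congr rfl fun k _ => by ring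
              · ring
      have h4 : μ (S j) = ∑ k : Fin G.natDegree,
          c k • T (Fin.castLE (by omega) k) := by
        have hSj : S j = AdjoinRoot.mk g (hpoly G (j : ℕ)) := by
          rw [hS j]; simp [hj]
        have hμS : μ (S j) = AdjoinRoot.mk g (f * hpoly G (j : ℕ)) := by
          rw [hSj, hμ, _root_.map_mul]; rfl
        rw [hμS, h3, map_add, _root_.map_mul, AdjoinRoot.mk_self, zero_mul, add_zero,
          _root_.map_sum]
        refine Finset.sum_congr rfl fun k _ => ?_
        have hTk : T (Fin.castLE (by omega : G.natDegree ≤ g.natDegree) k)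
            = AdjoinRoot.mk g (z * hpoly G (k : ℕ)) := by
          rw [hT]; simp [k.isLt]
        rw [hTk, AdjoinRoot.smul_mk, smul_eq_C_mul]
      rw [h4, _root_.map_sum]
      simp only [_root_.map_smul, Module.Basis.repr_self, Finsupp.coe_finset_sum, Finset.sum_apply,
        Finsupp.smul_apply, Finsupp.single_apply, smul_eq_mul, mul_ite, mul_one, mul_zero]
      by_cases hi : (i : ℕ) < G.natDegree
      · rw [Matrix.of_apply, dif_pos ⟨hi, hj⟩]
        rw [Finset.sum_eq_single ⟨(i : ℕ), hi⟩]
        · rw [if_pos (Fin.ext (by simp))]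
          rw [hcG]
        · intro k _ hk
          rw [if_neg]
          intro h
          exact hk (Fin.ext (by simpa using congrArg Fin.val h))
        · intro h; exact absurd (Finset.mem_univ _) h
      · rw [Matrix.of_apply, dif_neg (fun h => hi h.1)]
        refine Finset.sum_eq_zero fun k _ => ?_
        rw [if_neg]
        intro h
        have := congrArg Fin.val h
        simp at this
        omega
    · have hμS : μ (S j) = 0 := by
        have hSj : S j = AdjoinRoot.mk g (G * X ^ ((j : ℕ) - G.natDegree)) := by
          rw [hS j]; simp [hj]
        rw [hSj]
        show AdjoinRoot.mk g f * AdjoinRoot.mk g (G * X ^ ((j : ℕ) - G.natDegree)) = 0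
        rw [← _root_.map_mul, AdjoinRoot.mk_eq_zero]
        exact ⟨F * X ^ ((j : ℕ) - G.natDegree), by
          linear_combination (G * X ^ ((j : ℕ) - G.natDegree)) * hfz
            - (F * X ^ ((j : ℕ) - G.natDegree)) * hgz⟩
      rw [hμS, map_zero]
      rw [Matrix.of_apply, dif_neg (fun h => hj h.2)]
      rfl
  refine ⟨T.toMatrix hbg, hbg.toMatrix S, ?_, ?_, ?_⟩
  · exact IsUnit.of_mul_eq_one (hbg.toMatrix T).det
      (by rw [← Matrix.det_mul, Module.Basis.toMatrix_mul_toMatrix_flip, Matrix.det_one])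
  · exact IsUnit.of_mul_eq_one (S.toMatrix hbg).det
      (by rw [← Matrix.det_mul, Module.Basis.toMatrix_mul_toMatrix_flip, Matrix.det_one])
  · rw [hcg, basis_toMatrix_mul_linearMap_toMatrix_mul_basis_toMatrix, hblock]
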